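/- Let O be an open subset of Mat(2,ℂ) contained in {U : U₁₀ ≠ 0}, and let f be a holomorphic (ℂ-differentiable) function on O such that for every U ∈ O with det U = 1 one has (∂₊₊ f)(U) = 0 and (∂₀ f)(U) = 0. Then on SL(2,ℂ) the function f locally factors through the quotient coordinate c = u₊¹/u₊² of the right Borel action: for every U⁰ ∈ O with det U⁰ = 1 there exist an open neighborhood V ⊆ O of U⁰ and a holomorphic function g defined on an open subset of ℂ containing U⁰₀₀/U⁰₁₀ such that f(U) = g(U₀₀/U₁₀) for all U ∈ V with det U = 1. -/

import Mathlib

/-- The determinant of a 2×2 complex matrix, viewed as an element of `Fin 2 → Fin 2 → ℂ`. -/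
def det2 (U : Fin 2 → Fin 2 → ℂ) : ℂ := U 0 0 * U 1 1 - U 0 1 * U 1 0

/-- The direction `U·E` with `E = [[0,1],[0,0]]`, defining the fundamental vector
field `∂₊₊` of the right `SL(2,ℂ)`-action: `(U·E)_{i0} = 0`, `(U·E)_{i1} = U_{i0}`. -/
def dirE (U : Fin 2 → Fin 2 → ℂ) : Fin 2 → Fin 2 → ℂ :=
  fun i j => if j = 1 then U i 0 else 0

/-- The direction `U·H` with `H = [[1,0],[0,−1]]`, defining the fundamental vector
field `∂₀` of the right `SL(2,ℂ)`-action: `(U·H)_{i0} = U_{i0}`, `(U·H)_{i1} = −U_{i1}`. -/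
def dirH (U : Fin 2 → Fin 2 → ℂ) : Fin 2 → Fin 2 → ℂ :=
  fun i j => if j = 0 then U i 0 else -(U i 1)


noncomputable section
def Phi (p : ℂ × ℂ × ℂ) : Fin 2 → Fin 2 → ℂ :=
  ![![p.1 * p.2.1, p.1 * p.2.2 - p.2.1⁻¹], ![p.2.1, p.2.2]]
def P1 : (ℂ × ℂ × ℂ) →L[ℂ] ℂ := ContinuousLinearMap.fst ℂ ℂ (ℂ × ℂ)
def P2 : (ℂ × ℂ × ℂ) →L[ℂ] ℂ :=
  (ContinuousLinearMap.fst ℂ ℂ ℂ).comp (ContinuousLinearMap.snd ℂ ℂ (ℂ × ℂ))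
def P3 : (ℂ × ℂ × ℂ) →L[ℂ] ℂ :=
  (ContinuousLinearMap.snd ℂ ℂ ℂ).comp (ContinuousLinearMap.snd ℂ ℂ (ℂ × ℂ))
def DPhi (p : ℂ × ℂ × ℂ) : (ℂ × ℂ × ℂ) →L[ℂ] (Fin 2 → Fin 2 → ℂ) :=
  ContinuousLinearMap.pi fun i =>
    ContinuousLinearMap.pi fun j =>
      ![![p.2.1 • P1 + p.1 • P2,
          p.2.2 • P1 + (p.2.1 * p.2.1)⁻¹ • P2 + p.1 • P3], ![P2, P3]] i j

lemma Phi_eq (U : Fin 2 → Fin 2 → ℂ) (h10 : U 1 0 ≠ 0) (hdet : det2 U = 1) :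
    Phi (U 0 0 / U 1 0, U 1 0, U 1 1) = U := by
  have hd : U 0 0 * U 1 1 - U 0 1 * U 1 0 = 1 := hdet
  funext i j
  fin_cases i <;> fin_cases j <;>
    simp only [Phi, Fin.mk_zero, Fin.mk_one, Matrix.cons_val_zero, Matrix.cons_val_one,
      Matrix.head_cons, Fin.isValue]
  · field_simp
  · rw [div_mul_eq_mul_div, sub_eq_iff_eq_add, inv_eq_one_div, add_div' _ _ _ h10,
      div_eq_div_iff h10 h10]
    linear_combination U 1 0 * hd

lemma det2_Phi (p : ℂ × ℂ × ℂ) (ht : p.2.1 ≠ 0) : det2 (Phi p) = 1 := by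
  simp only [det2, Phi, Matrix.cons_val_zero, Matrix.cons_val_one, Matrix.head_cons]
  field_simp
  ring

lemma DPhi_dir (p : ℂ × ℂ × ℂ) (ht : p.2.1 ≠ 0) (w₁ w₂ : ℂ) :
    DPhi p (0, w₁, w₂) =
      (w₁ * p.2.1⁻¹) • dirH (Phi p) +
      (w₁ * p.2.2 * (p.2.1 * p.2.1)⁻¹ + w₂ * p.2.1⁻¹) • dirE (Phi p) := by
  funext i j
  fin_cases i <;> fin_cases j <;>
    simp only [DPhi, dirE, dirH, Phi, ContinuousLinearMap.pi_apply, Fin.mk_zero, Fin.mk_one,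
      Matrix.cons_val_zero, Matrix.cons_val_one, Matrix.head_cons, Fin.isValue,
      ContinuousLinearMap.add_apply, ContinuousLinearMap.smul_apply, P1, P2, P3,
      ContinuousLinearMap.comp_apply, ContinuousLinearMap.coe_fst', ContinuousLinearMap.coe_snd',
      Pi.add_apply, Pi.smul_apply, smul_eq_mul] <;>
    (simp <;> field_simp <;> ring)

lemma hasFDerivAt_Phi (p : ℂ × ℂ × ℂ) (ht : p.2.1 ≠ 0) :
    HasFDerivAt Phi (DPhi p) p := by
  rw [hasFDerivAt_pi']
  intro i
  rw [hasFDerivAt_pi']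
  intro j
  have h1 : HasFDerivAt (fun q : ℂ × ℂ × ℂ => q.1) P1 p := hasFDerivAt_fst
  have h2 : HasFDerivAt (fun q : ℂ × ℂ × ℂ => q.2.1) P2 p :=
    (hasFDerivAt_fst (p := p.2)).comp p hasFDerivAt_snd
  have h3 : HasFDerivAt (fun q : ℂ × ℂ × ℂ => q.2.2) P3 p :=
    (hasFDerivAt_snd (p := p.2)).comp p hasFDerivAt_snd
  have hinv : HasFDerivAt (fun q : ℂ × ℂ × ℂ => q.2.1⁻¹) ((-(p.2.1 ^ 2)⁻¹) • P2) p :=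
    (hasDerivAt_inv ht).comp_hasFDerivAt p h2
  fin_cases i <;> fin_cases j <;>
    simp only [Phi, DPhi, ContinuousLinearMap.proj_pi, Fin.mk_zero, Fin.mk_one,
      Matrix.cons_val_zero, Matrix.cons_val_one, Matrix.head_cons, Fin.isValue] <;>
    [skip; skip; exact h2; exact h3]
  · refine (h1.mul h2).congr_fderiv ?_
    refine ContinuousLinearMap.ext fun w => ?_
    simp [P1, P2, P3]
    ring
  · refine ((h1.mul h3).sub hinv).congr_fderiv ?_
    refine ContinuousLinearMap.ext fun w => ?_
    have h2 : (p.2.1 * p.2.1)⁻¹ = (p.2.1 ^ 2)⁻¹ := by rw [sq]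
    simp [P1, P2, P3, h2]
    ring


end

/-- The key step in the proof of Lemma 4.12 (i) of the paper: a holomorphic
function on an open subset of `{U : u₊² ≠ 0} ⊆ Mat(2,ℂ)` satisfying
`∂₊₊ f = ∂₀ f = 0` on `SL(2,ℂ)` locally factors through the quotient coordinate
`c = u₊¹/u₊²` of the right Borel action: `f = g(u₊¹/u₊²)` for a holomorphic `g`. -/
theorem charge_zero_analytic_factors_through_c
    (O : Set (Fin 2 → Fin 2 → ℂ)) (hO : IsOpen O)
    (hO' : O ⊆ {U : Fin 2 → Fin 2 → ℂ | U 1 0 ≠ 0})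
    (f : (Fin 2 → Fin 2 → ℂ) → ℂ) (hf : DifferentiableOn ℂ f O)
    (hE : ∀ U ∈ O, det2 U = 1 → fderiv ℂ f U (dirE U) = 0)
    (hH : ∀ U ∈ O, det2 U = 1 → fderiv ℂ f U (dirH U) = 0) :
    ∀ U₀ ∈ O, det2 U₀ = 1 →
      ∃ V : Set (Fin 2 → Fin 2 → ℂ), V ⊆ O ∧ IsOpen V ∧ U₀ ∈ V ∧
      ∃ W : Set ℂ, IsOpen W ∧ U₀ 0 0 / U₀ 1 0 ∈ W ∧
      ∃ g : ℂ → ℂ, DifferentiableOn ℂ g W ∧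
        ∀ U ∈ V, det2 U = 1 → f U = g (U 0 0 / U 1 0) := by
  intro U₀ hU₀ hdet₀
  have ht₀ : U₀ 1 0 ≠ 0 := hO' hU₀
  set p₀ : ℂ × ℂ × ℂ := (U₀ 0 0 / U₀ 1 0, U₀ 1 0, U₀ 1 1) with hp₀
  have hPhip₀ : Phi p₀ = U₀ := Phi_eq U₀ ht₀ hdet₀
  -- the domain in parameter space
  set D : Set (ℂ × ℂ × ℂ) := {p | p.2.1 ≠ 0 ∧ Phi p ∈ O} with hDdef
  have hS : IsOpen {p : ℂ × ℂ × ℂ | p.2.1 ≠ 0} :=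
    isOpen_ne.preimage (continuous_fst.comp continuous_snd)
  have hPhiCont : ContinuousOn Phi {p : ℂ × ℂ × ℂ | p.2.1 ≠ 0} := by
    rw [continuousOn_pi]
    intro i
    rw [continuousOn_pi]
    intro j
    have hc1 : ContinuousOn (fun p : ℂ × ℂ × ℂ => p.1) {p | p.2.1 ≠ 0} :=
      continuous_fst.continuousOn
    have hc2 : ContinuousOn (fun p : ℂ × ℂ × ℂ => p.2.1) {p | p.2.1 ≠ 0} :=
      (continuous_fst.comp continuous_snd).continuousOn
    have hc3 : ContinuousOn (fun p : ℂ × ℂ × ℂ => p.2.2) {p | p.2.1 ≠ 0} :=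
      (continuous_snd.comp continuous_snd).continuousOn
    fin_cases i <;> fin_cases j <;>
      simp only [Phi, Fin.mk_zero, Fin.mk_one, Matrix.cons_val_zero, Matrix.cons_val_one,
        Matrix.head_cons, Fin.isValue]
    · exact hc1.mul hc2
    · exact (hc1.mul hc3).sub (hc2.inv₀ fun p hp => hp)
    · exact hc2
    · exact hc3
  have hDopen : IsOpen D := hPhiCont.isOpen_inter_preimage hS hO
  have hp₀D : p₀ ∈ D := ⟨ht₀, by rw [hPhip₀]; exact hU₀⟩
  obtain ⟨r, hr0, hball⟩ := Metric.isOpen_iff.mp hDopen p₀ hp₀D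
  -- derivative of f ∘ Phi vanishes in the (t,d) directions on D
  have hkey : ∀ p ∈ D, ∀ w : ℂ × ℂ, fderiv ℂ f (Phi p) (DPhi p (0, w)) = 0 := by
    intro p hp w
    obtain ⟨ht, hmem⟩ := hp
    have hdet : det2 (Phi p) = 1 := det2_Phi p ht
    have : (0, w) = ((0 : ℂ), w.1, w.2) := by simp
    rw [this, DPhi_dir p ht w.1 w.2, map_add, map_smul, map_smul,
      hE _ hmem hdet, hH _ hmem hdet]
    simp
  -- the slice functions are constant
  have hconst : ∀ c : ℂ, dist c p₀.1 < r → ∀ q ∈ Metric.ball p₀.2 r,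
      f (Phi (c, q)) = f (Phi (c, p₀.2)) := by
    intro c hc q hq
    have hmem : ∀ q' ∈ Metric.ball p₀.2 r, (c, q') ∈ D := by
      intro q' hq'
      apply hball
      rw [Metric.mem_ball] at hq' ⊢
      rw [hp₀, Prod.dist_eq]
      exact max_lt hc hq'
    have hdiffat : ∀ q' ∈ Metric.ball p₀.2 r,
        HasFDerivAt (fun q'' : ℂ × ℂ => f (Phi (c, q'')))
          ((fderiv ℂ f (Phi (c, q'))).comp
            ((DPhi (c, q')).comp (ContinuousLinearMap.inr ℂ ℂ (ℂ × ℂ)))) q' := by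
      intro q' hq'
      obtain ⟨ht', hO'mem⟩ := hmem q' hq'
      have hfd : DifferentiableAt ℂ f (Phi (c, q')) :=
        hf.differentiableAt (hO.mem_nhds hO'mem)
      exact hfd.hasFDerivAt.comp q'
        ((hasFDerivAt_Phi (c, q') ht').comp q' (hasFDerivAt_prodMk_right c q'))
    refine (convex_ball p₀.2 r).is_const_of_fderivWithin_eq_zero
      (fun q' hq' => (hdiffat q' hq').differentiableAt.differentiableWithinAt)
      (fun q' hq' => ?_) hq (Metric.mem_ball_self hr0)
    rw [fderivWithin_of_isOpen Metric.isOpen_ball hq', (hdiffat q' hq').fderiv]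
    refine ContinuousLinearMap.ext fun w => ?_
    simpa using hkey (c, q') (hmem q' hq') w
  -- assemble the data
  refine ⟨O ∩ {U | U 1 0 ≠ 0 ∧ (U 0 0 / U 1 0, U 1 0, U 1 1) ∈ Metric.ball p₀ r},
    Set.inter_subset_left, ?_, ⟨hU₀, ht₀, Metric.mem_ball_self hr0⟩,
    Metric.ball (U₀ 0 0 / U₀ 1 0) r, Metric.isOpen_ball, Metric.mem_ball_self hr0,
    fun c => f (Phi (c, p₀.2)), ?_, ?_⟩
  · -- openness of V
    apply hO.inter
    have hψ : ContinuousOn (fun U : Fin 2 → Fin 2 → ℂ => (U 0 0 / U 1 0, U 1 0, U 1 1))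
        {U : Fin 2 → Fin 2 → ℂ | U 1 0 ≠ 0} := by
      have e00 : Continuous (fun U : Fin 2 → Fin 2 → ℂ => U 0 0) :=
        (continuous_apply (0 : Fin 2)).comp (continuous_apply (0 : Fin 2))
      have e10 : Continuous (fun U : Fin 2 → Fin 2 → ℂ => U 1 0) :=
        (continuous_apply (0 : Fin 2)).comp (continuous_apply (1 : Fin 2))
      have e11 : Continuous (fun U : Fin 2 → Fin 2 → ℂ => U 1 1) :=
        (continuous_apply (1 : Fin 2)).comp (continuous_apply (1 : Fin 2))
      exact (e00.continuousOn.div e10.continuousOn fun U hU => hU).prodMk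
        (e10.continuousOn.prodMk e11.continuousOn)
    have hS' : IsOpen {U : Fin 2 → Fin 2 → ℂ | U 1 0 ≠ 0} := by
      have e10 : Continuous (fun U : Fin 2 → Fin 2 → ℂ => U 1 0) :=
        (continuous_apply (0 : Fin 2)).comp (continuous_apply (1 : Fin 2))
      exact isOpen_ne.preimage e10
    have := hψ.isOpen_inter_preimage hS'
      (Metric.isOpen_ball (x := p₀) (ε := r))
    exact this
  · -- differentiability of g
    intro c hc
    have hcd : (c, p₀.2) ∈ D := by
      apply hball
      rw [Metric.mem_ball] at hc ⊢
      rw [Prod.dist_eq]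
      simp only [dist_self]
      exact max_lt hc hr0
    obtain ⟨ht', hO'mem⟩ := hcd
    have hfd : DifferentiableAt ℂ f (Phi (c, p₀.2)) :=
      hf.differentiableAt (hO.mem_nhds hO'mem)
    have hinner : DifferentiableAt ℂ (fun c' : ℂ => Phi (c', p₀.2)) c :=
      ((hasFDerivAt_Phi (c, p₀.2) ht').differentiableAt.comp c
        (hasFDerivAt_prodMk_left (𝕜 := ℂ) c p₀.2).differentiableAt :)
    exact (hfd.comp c hinner).differentiableWithinAt
  · -- the factorization
    rintro U ⟨hUO, ht, hUball⟩ hdetU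
    have hPhiU : Phi (U 0 0 / U 1 0, U 1 0, U 1 1) = U := Phi_eq U ht hdetU
    rw [Metric.mem_ball, Prod.dist_eq, max_lt_iff] at hUball
    calc f U = f (Phi (U 0 0 / U 1 0, U 1 0, U 1 1)) := by rw [hPhiU]
    _ = f (Phi (U 0 0 / U 1 0, p₀.2)) :=
        hconst _ hUball.1 _ (Metric.mem_ball.mpr hUball.2)
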